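/- Let n and d_min satisfy n > ⌊log₂ n⌋ + 1 and d_min ≥ 1, and write L = ⌊log₂ n⌋. Then there exist a residue a modulo n + 1 and a code C* of binary words of length n such that every x ∈ C* satisfies σ(x) ≡ a (mod n+1), the minimum Hamming distance of C* is at least d_min, and (as rational numbers) |C*| ≥ max{ 2^{n−1} / V₂(n, d_min + 1), 2^{n−L−1} / V₂(n − L − 1, d_min − 1) }, where V₂(n, r) = Σ_{i=0}^{r} C(n, i). -/

import Mathlib

/-- The moment of a binary word `x = x_1 … x_n`: `σ(x) = ∑ i, i * x_i` (1-based indexing). -/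
def mom {n : ℕ} (x : Fin n → Bool) : ℕ :=
  ∑ i : Fin n, ((i : ℕ) + 1) * (if x i then 1 else 0)

open Finset



lemma ballCard {m : ℕ} (x : Fin m → Bool) (r : ℕ) :
    ({y : Fin m → Bool | hammingDist x y ≤ r} : Finset _).card
      ≤ ∑ i ∈ range (r+1), m.choose i := by
  classical
  set T : Finset (Finset (Fin m)) := (range (r+1)).biUnion (fun i => univ.powersetCard i) with hT
  have hmap : ∀ y ∈ ({y : Fin m → Bool | hammingDist x y ≤ r} : Finset _),
      ({i | x i ≠ y i} : Finset (Fin m)) ∈ T := by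
    intro y hy
    simp only [mem_filter, mem_univ, true_and] at hy
    simp only [hT, mem_biUnion, mem_range]
    refine ⟨hammingDist x y, by omega, ?_⟩
    rw [mem_powersetCard]
    exact ⟨subset_univ _, rfl⟩
  have hinj : Set.InjOn (fun y : Fin m → Bool => ({i | x i ≠ y i} : Finset (Fin m)))
      ({y : Fin m → Bool | hammingDist x y ≤ r} : Finset _) := by
    intro y hy z hz h
    funext i
    have h3 := (Finset.ext_iff.mp h i)
    simp only [mem_filter, mem_univ, true_and] at h3
    cases hx : x i <;> cases hy2 : y i <;> cases hz2 : z i <;> simp_all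
  calc ({y : Fin m → Bool | hammingDist x y ≤ r} : Finset _).card
      ≤ T.card := Finset.card_le_card_of_injOn _ hmap hinj
    _ ≤ ∑ i ∈ range (r+1), (univ.powersetCard i : Finset (Finset (Fin m))).card :=
        Finset.card_biUnion_le
    _ = ∑ i ∈ range (r+1), m.choose i := by
        refine Finset.sum_congr rfl fun i _ => ?_
        rw [Finset.card_powersetCard, card_univ, Fintype.card_fin]

-- Covering bound
lemma coverBound {m : ℕ} (C : Finset (Fin m → Bool)) (ρ : ℕ)
    (h : ∀ y : Fin m → Bool, ∃ c ∈ C, hammingDist c y ≤ ρ) :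
    2 ^ m ≤ C.card * ∑ i ∈ range (ρ+1), m.choose i := by
  classical
  have hsub : (univ : Finset (Fin m → Bool))
      ⊆ C.biUnion (fun c => ({y | hammingDist c y ≤ ρ} : Finset _)) := by
    intro y _
    rw [mem_biUnion]
    obtain ⟨c, hc, hcy⟩ := h y
    exact ⟨c, hc, by simpa using hcy⟩
  have h1 : (univ : Finset (Fin m → Bool)).card = 2 ^ m := by
    simp [card_univ]
  calc 2 ^ m = (univ : Finset (Fin m → Bool)).card := h1.symm
    _ ≤ (C.biUnion (fun c => ({y | hammingDist c y ≤ ρ} : Finset _))).card :=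
        Finset.card_le_card hsub
    _ ≤ ∑ c ∈ C, ({y | hammingDist c y ≤ ρ} : Finset _).card := Finset.card_biUnion_le
    _ ≤ ∑ _c ∈ C, ∑ i ∈ range (ρ+1), m.choose i :=
        Finset.sum_le_sum fun c _ => ballCard c ρ
    _ = C.card * ∑ i ∈ range (ρ+1), m.choose i := by rw [Finset.sum_const, smul_eq_mul]

lemma mom_update {n : ℕ} (y : Fin n → Bool) (i : Fin n) (b : Bool) :
    mom (Function.update y i b) + ((i : ℕ) + 1) * (if y i then 1 else 0)
      = mom y + ((i : ℕ) + 1) * (if b then 1 else 0) := by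
  classical
  unfold mom
  rw [← Finset.sum_erase_add _ _ (mem_univ i), ← Finset.sum_erase_add _ _ (mem_univ i)]
  have he : ∑ j ∈ univ.erase i, ((j : ℕ) + 1) * (if Function.update y i b j then 1 else 0)
      = ∑ j ∈ univ.erase i, ((j : ℕ) + 1) * (if y j then 1 else 0) := by
    refine Finset.sum_congr rfl fun j hj => ?_
    rw [Function.update_of_ne (Finset.ne_of_mem_erase hj)]
  rw [he, Function.update_self]
  ring

lemma hammingDist_update {n : ℕ} (y : Fin n → Bool) (i : Fin n) (b : Bool) :
    hammingDist y (Function.update y i b) ≤ 1 := by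
  classical
  have : ({k | y k ≠ Function.update y i b k} : Finset (Fin n)) ⊆ {i} := by
    intro k hk
    simp only [mem_filter, mem_univ, true_and] at hk
    simp only [mem_singleton]
    by_contra hki
    exact hk (by rw [Function.update_of_ne hki])
  calc hammingDist y (Function.update y i b) ≤ ({i} : Finset (Fin n)).card :=
        Finset.card_le_card this
    _ = 1 := rfl

lemma finof {n : ℕ} {j : ℕ} (h1 : 1 ≤ j) (h2 : j ≤ n) : ∃ i : Fin n, (i : ℕ) + 1 = j :=
  ⟨⟨j - 1, by omega⟩, by simp only [Fin.val_mk]; omega⟩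

/-- From any word, a word with moment divisible by `n+1` is within Hamming distance 2. -/
lemma reach {n : ℕ} (hn : 1 ≤ n) (y : Fin n → Bool) :
    ∃ y' : Fin n → Bool, hammingDist y y' ≤ 2 ∧ mom y' % (n + 1) = 0 := by
  classical
  set σ := mom y with hσ
  set r : ℕ := (n + 1 - σ % (n + 1)) % (n + 1) with hr
  have hq : σ % (n + 1) < n + 1 := Nat.mod_lt _ (by omega)
  have hrn : r < n + 1 := Nat.mod_lt _ (by omega)
  have e1 : σ % (n + 1) + (n + 1) * (σ / (n + 1)) = σ := Nat.mod_add_div σ (n+1)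
  have key : ∃ t, σ + r = (n + 1) * t := by
    rcases Nat.eq_zero_or_pos (σ % (n + 1)) with h0 | h0
    · refine ⟨σ / (n+1), ?_⟩
      have : r = 0 := by rw [hr, h0, Nat.sub_zero, Nat.mod_self]
      omega
    · refine ⟨σ / (n+1) + 1, ?_⟩
      have hrv : r = n + 1 - σ % (n + 1) := by
        rw [hr]; exact Nat.mod_eq_of_lt (by omega)
      have expand : (n+1) * (σ/(n+1) + 1) = (n+1) * (σ/(n+1)) + (n+1) := by ring
      omega
  obtain ⟨t, key⟩ := key
  have concl : ∀ y' : Fin n → Bool, (mom y' = σ + r ∨ mom y' + (n+1) = σ + r) →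
      mom y' % (n + 1) = 0 := by
    intro y' h
    rcases h with h | h
    · rw [h, key]; exact Nat.mul_mod_right _ _
    · rcases t with _ | t'
      · omega
      · have expand : (n+1) * (t'+1) = (n+1) * t' + (n+1) := by ring
        have : mom y' = (n+1) * t' := by omega
        rw [this]; exact Nat.mul_mod_right _ _
  -- value-indexed access
  obtain ⟨Y, hYv⟩ : ∃ Y : ℕ → Bool, ∀ (i : Fin n) (j : ℕ), (i : ℕ) + 1 = j → Y j = y i := by
    refine ⟨fun v => if h : v - 1 < n then y ⟨v - 1, h⟩ else false, ?_⟩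
    intro i j h
    have hi := i.isLt
    show (if h : j - 1 < n then y ⟨j - 1, h⟩ else false) = y i
    rw [dif_pos (show j - 1 < n by omega)]
    congr 1
    exact Fin.ext (by simp only [Fin.val_mk]; omega)
  rcases Nat.eq_zero_or_pos r with hr0 | hr1
  · exact ⟨y, by simp, concl y (Or.inl (by omega))⟩
  have hrle : r ≤ n := by omega
  set s : ℕ := n + 1 - r with hs
  have hs1 : 1 ≤ s := by omega
  have hsle : s ≤ n := by omega
  obtain ⟨ir, hirv⟩ := finof (n := n) hr1 hrle
  obtain ⟨is', hisv⟩ := finof (n := n) hs1 hsle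
  by_cases hyr : y ir = false
  · refine ⟨Function.update y ir true, le_trans (hammingDist_update y ir true) (by omega), ?_⟩
    apply concl; left
    have h2 := mom_update y ir true
    rw [hyr, hirv] at h2
    simp at h2; omega
  have hyr' : y ir = true := by revert hyr; cases y ir <;> simp
  by_cases hys : y is' = true
  · refine ⟨Function.update y is' false, le_trans (hammingDist_update y is' false) (by omega), ?_⟩
    apply concl; right
    have h2 := mom_update y is' false
    rw [hys, hisv] at h2
    simp at h2; omega
  have hys' : y is' = false := by revert hys; cases y is' <;> simp
  by_cases hc3 : ∃ j : ℕ, 1 ≤ j ∧ j + r ≤ n ∧ Y j = true ∧ Y (j + r) = false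
  · obtain ⟨j, hj1, hjr, hYj, hYjr⟩ := hc3
    obtain ⟨ij, hijv⟩ := finof (n := n) hj1 (by omega)
    obtain ⟨ijr, hijrv⟩ := finof (n := n) (show 1 ≤ j + r by omega) hjr
    have hne : ijr ≠ ij := by
      intro h; rw [h] at hijrv; omega
    have hyj : y ij = true := by rw [← hYv ij j hijv]; exact hYj
    have hyjr : y ijr = false := by rw [← hYv ijr (j + r) hijrv]; exact hYjr
    set y1 := Function.update y ij false with hy1
    have h2 := mom_update y ij false
    rw [hyj, hijv] at h2
    rw [← hy1] at h2
    simp at h2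
    have hy1jr : y1 ijr = false := by rw [hy1, Function.update_of_ne hne]; exact hyjr
    set y2 := Function.update y1 ijr true with hy2
    have h3 := mom_update y1 ijr true
    rw [hy1jr, hijrv] at h3
    rw [← hy2] at h3
    simp at h3
    refine ⟨y2, ?_, concl y2 (Or.inl (by omega))⟩
    calc hammingDist y y2 ≤ hammingDist y y1 + hammingDist y1 y2 := hammingDist_triangle _ _ _
      _ ≤ 2 := by
          have u1 := hammingDist_update y ij false
          have u2 := hammingDist_update y1 ijr true
          rw [← hy1] at u1; rw [← hy2] at u2; omega
  by_cases hc4 : ∃ j : ℕ, 1 ≤ j ∧ j + s ≤ n ∧ Y j = false ∧ Y (j + s) = true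
  · obtain ⟨j, hj1, hjs, hYj, hYjs⟩ := hc4
    obtain ⟨ij, hijv⟩ := finof (n := n) hj1 (by omega)
    obtain ⟨ijs, hijsv⟩ := finof (n := n) (show 1 ≤ j + s by omega) hjs
    have hne : ij ≠ ijs := by
      intro h; rw [h] at hijv; omega
    have hyj : y ij = false := by rw [← hYv ij j hijv]; exact hYj
    have hyjs : y ijs = true := by rw [← hYv ijs (j + s) hijsv]; exact hYjs
    set y1 := Function.update y ijs false with hy1
    have h2 := mom_update y ijs false
    rw [hyjs, hijsv] at h2
    rw [← hy1] at h2
    simp at h2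
    have hy1j : y1 ij = false := by rw [hy1, Function.update_of_ne hne]; exact hyj
    set y2 := Function.update y1 ij true with hy2
    have h3 := mom_update y1 ij true
    rw [hy1j, hijv] at h3
    rw [← hy2] at h3
    simp at h3
    refine ⟨y2, ?_, concl y2 (Or.inr (by omega))⟩
    calc hammingDist y y2 ≤ hammingDist y y1 + hammingDist y1 y2 := hammingDist_triangle _ _ _
      _ ≤ 2 := by
          have u1 := hammingDist_update y ijs false
          have u2 := hammingDist_update y1 ij true
          rw [← hy1] at u1; rw [← hy2] at u2; omega
  -- contradiction case
  exfalso
  push_neg at hc3 hc4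
  have hB : ∀ j, 1 ≤ j → j + r ≤ n → Y j = true → Y (j + r) = true := by
    intro j h1 h2 h3
    have := hc3 j h1 h2 h3
    revert this; cases Y (j + r) <;> simp
  have hC : ∀ j, 1 ≤ j → j + s ≤ n → Y (j + s) = true → Y j = true := by
    intro j h1 h2 h3
    by_contra hf
    have hf' : Y j = false := by revert hf; cases Y j <;> simp
    exact absurd h3 (hc4 j h1 h2 hf')
  have hYr : Y r = true := by rw [hYv ir r hirv]; exact hyr'
  have hYs : Y s = false := by rw [hYv is' s hisv]; exact hys'
  have chain : ∀ k, 1 ≤ k → (∀ j, 1 ≤ j → j ≤ k → (j * r) % (n + 1) ≠ 0) →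
      Y ((k * r) % (n + 1)) = true := by
    intro k
    induction k with
    | zero => omega
    | succ k ih =>
      intro _ hall
      rcases Nat.eq_zero_or_pos k with hk0 | hkpos
      · subst hk0
        rw [show (0 + 1) * r = r by ring, Nat.mod_eq_of_lt hrn]
        exact hYr
      · have ihh := ih hkpos (fun j h1 h2 => hall j h1 (by omega))
        set p := (k * r) % (n + 1) with hp
        have hpn : p < n + 1 := Nat.mod_lt _ (by omega)
        have hp1 : 1 ≤ p := Nat.pos_of_ne_zero (hall k hkpos (by omega))
        have hnext : ((k + 1) * r) % (n + 1) = (p + r) % (n + 1) := by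
          conv_lhs => rw [show (k + 1) * r = k * r + r by ring]
          rw [Nat.add_mod, ← hp, Nat.mod_eq_of_lt hrn]
        have hZ : ((k + 1) * r) % (n + 1) ≠ 0 := hall (k + 1) (by omega) le_rfl
        rcases lt_trichotomy (p + r) (n + 1) with hlt | heq | hgt
        · have hv : ((k + 1) * r) % (n + 1) = p + r := by rw [hnext, Nat.mod_eq_of_lt hlt]
          rw [hv]
          exact hB p hp1 (by omega) ihh
        · exact absurd (by rw [hnext, heq, Nat.mod_self]) hZ
        · have hps : p + r = (p - s) + (n + 1) := by omega
          have hv : ((k + 1) * r) % (n + 1) = p - s := by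
            rw [hnext, hps, Nat.add_mod_right, Nat.mod_eq_of_lt (by omega)]
          rw [hv]
          have hpss : (p - s) + s = p := by omega
          apply hC (p - s) (by omega) (by omega)
          rw [hpss]
          exact ihh
  have hex : ∃ k, 1 ≤ k ∧ (k * r) % (n + 1) = 0 :=
    ⟨n + 1, by omega, by rw [Nat.mul_mod_right]⟩
  obtain ⟨hk01, hk0z⟩ := Nat.find_spec hex
  set k0 := Nat.find hex with hk0
  have hk0min : ∀ m, m < k0 → ¬(1 ≤ m ∧ (m * r) % (n + 1) = 0) := fun m hm => Nat.find_min hex hm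
  have hk0ne1 : k0 ≠ 1 := by
    intro h
    rw [h, one_mul, Nat.mod_eq_of_lt hrn] at hk0z
    omega
  have hk02 : 2 ≤ k0 := by omega
  have hch := chain (k0 - 1) (by omega) (fun j h1 h2 hj0 => hk0min j (by omega) ⟨h1, hj0⟩)
  set f := ((k0 - 1) * r) % (n + 1) with hf
  have hfn : f < n + 1 := Nat.mod_lt _ (by omega)
  have hf1 : 1 ≤ f := Nat.pos_of_ne_zero (fun hj0 => hk0min (k0 - 1) (by omega) ⟨by omega, hj0⟩)
  have hsum : (f + r) % (n + 1) = 0 := by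
    have : (k0 * r) % (n + 1) = (f + r) % (n + 1) := by
      have hk0e : (k0 - 1) * r + r = k0 * r := by
        have hh : k0 - 1 + 1 = k0 := by omega
        calc (k0 - 1) * r + r = (k0 - 1 + 1) * r := by ring
          _ = k0 * r := by rw [hh]
      conv_lhs => rw [← hk0e]
      rw [Nat.add_mod, ← hf, Nat.mod_eq_of_lt hrn]
    rw [← this, hk0z]
  have hfs : f = s := by
    have h2n : f + r < 2 * (n + 1) := by omega
    have h1n : 1 ≤ f + r := by omega
    have := Nat.mod_add_div (f + r) (n + 1)
    set q2 := (f + r) / (n + 1) with hq2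
    rw [hsum] at this
    rcases q2 with _ | q2'
    · omega
    · rcases q2' with _ | q2''
      · omega
      · have hexp : (n + 1) * (q2'' + 1 + 1) = (n + 1) * q2'' + (n + 1) + (n + 1) := by ring
        omega
  rw [hfs] at hch
  rw [hch] at hYs
  simp at hYs

lemma bitsum : ∀ (m t : ℕ), ∑ k ∈ range m, 2 ^ k * (t.testBit k).toNat = t % 2 ^ m := by
  intro m
  induction m with
  | zero => intro t; simp [Nat.mod_one]
  | succ m ih =>
    intro t
    rw [Finset.sum_range_succ, ih]
    have hbit : (t.testBit m).toNat = t / 2 ^ m % 2 := by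
      rcases Nat.mod_two_eq_zero_or_one (t / 2 ^ m) with h | h <;>
        simp [Nat.testBit_eq_decide_div_mod_eq, h]
    rw [hbit, pow_succ, Nat.mod_mul]

lemma mod_key (σ : ℕ) (m : ℕ) (hm : 0 < m) : (σ + (m - σ % m) % m) % m = 0 := by
  have hq : σ % m < m := Nat.mod_lt _ hm
  have e1 : σ % m + m * (σ / m) = σ := Nat.mod_add_div σ m
  rcases Nat.eq_zero_or_pos (σ % m) with h0 | h0
  · rw [h0, Nat.sub_zero, Nat.mod_self, Nat.add_zero]
    exact h0
  · have hrv : (m - σ % m) % m = m - σ % m := Nat.mod_eq_of_lt (by omega)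
    rw [hrv]
    have : σ + (m - σ % m) = m * (σ / m + 1) := by
      have expand : m * (σ / m + 1) = m * (σ / m) + m := by ring
      omega
    rw [this]
    exact Nat.mul_mod_right _ _

lemma construction {n dmin : ℕ} (hd : 1 ≤ dmin) (hn : Nat.log 2 n + 1 < n) :
    ∃ E : Finset (Fin n → Bool),
      (∀ x ∈ E, mom x % (n + 1) = 0) ∧
      (∀ x ∈ E, ∀ y ∈ E, x ≠ y → dmin ≤ hammingDist x y) ∧
      2 ^ (n - Nat.log 2 n - 1)
        ≤ E.card * ∑ i ∈ Finset.range dmin, ((n - Nat.log 2 n - 1).choose i) ∧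
      E.Nonempty := by
  classical
  set L := Nat.log 2 n with hL
  set n' := n - L - 1 with hn'
  have hn1 : 1 ≤ n := by omega
  have hpowL : 2 ^ L ≤ n := Nat.pow_log_le_self 2 (by omega)
  have hnlt : n < 2 ^ (L + 1) := Nat.lt_pow_succ_log_self (by norm_num) n
  have hgdef : ∀ k : Fin (L + 1), 2 ^ (k : ℕ) - 1 < n := by
    intro k
    have hk := k.isLt
    have h2 : 2 ^ (k : ℕ) ≤ 2 ^ L := Nat.pow_le_pow_right (by norm_num) (by omega)
    omega
  set g : Fin (L + 1) → Fin n := fun k => ⟨2 ^ (k : ℕ) - 1, hgdef k⟩ with hg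
  have hgval : ∀ k : Fin (L + 1), ((g k : Fin n) : ℕ) + 1 = 2 ^ (k : ℕ) := by
    intro k
    simp only [hg]
    have : 1 ≤ 2 ^ (k : ℕ) := Nat.one_le_two_pow
    omega
  have hginj : Function.Injective g := by
    intro k k' h
    have h2 : (2 : ℕ) ^ (k : ℕ) = 2 ^ (k' : ℕ) := by
      have := hgval k; have := hgval k'; rw [h] at *; omega
    exact Fin.ext (Nat.pow_right_injective (le_refl 2) h2)
  set P : Finset (Fin n) := Finset.image g Finset.univ with hP
  have hPcard : P.card = L + 1 := by
    rw [hP, Finset.card_image_of_injective _ hginj, card_univ, Fintype.card_fin]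
  set F : Finset (Fin n) := Pᶜ with hF
  have hFcard : F.card = n' := by
    rw [hF, Finset.card_compl, hPcard, Fintype.card_fin]; omega
  set e := F.orderIsoOfFin hFcard with he
  set w : (Fin n' → Bool) → (Fin n → Bool) :=
    fun u i => if h : i ∈ F then u (e.symm ⟨i, h⟩) else false with hw
  set tv : (Fin n' → Bool) → ℕ := fun u => (n + 1 - (mom (w u)) % (n + 1)) % (n + 1) with htv
  set enc : (Fin n' → Bool) → (Fin n → Bool) := fun u i =>
    if h : i ∈ F then u (e.symm ⟨i, h⟩) else (tv u).testBit (Nat.log 2 ((i : ℕ) + 1)) with henc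
  have htvlt : ∀ u, tv u < n + 1 := fun u => Nat.mod_lt _ (by omega)
  have hgP : ∀ k, g k ∈ P := by
    intro k; rw [hP]; exact mem_image_of_mem _ (mem_univ _)
  have hencg : ∀ u k, enc u (g k) = (tv u).testBit (k : ℕ) := by
    intro u k
    have hgF : g k ∉ F := by rw [hF]; simpa using hgP k
    simp only [henc]
    rw [dif_neg hgF, hgval k, Nat.log_pow (by norm_num)]
  have hencF : ∀ u (i : Fin n) (h : i ∈ F), enc u i = u (e.symm ⟨i, h⟩) := by
    intro u i h; simp only [henc]; rw [dif_pos h]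
  have hwF : ∀ u (i : Fin n) (h : i ∈ F), w u i = u (e.symm ⟨i, h⟩) := by
    intro u i h; simp only [hw]; rw [dif_pos h]
  have hmom : ∀ u, mom (enc u) % (n + 1) = 0 := by
    intro u
    have hsplit : mom (enc u) = (∑ i ∈ P, ((i : ℕ) + 1) * (if enc u i then 1 else 0))
        + ∑ i ∈ Pᶜ, ((i : ℕ) + 1) * (if enc u i then 1 else 0) :=
      (Finset.sum_add_sum_compl P _).symm
    have hPsum : (∑ i ∈ P, ((i : ℕ) + 1) * (if enc u i then 1 else 0)) = tv u := by
      rw [hP, Finset.sum_image (fun a _ b _ h => hginj h)]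
      have hterm : ∀ k : Fin (L + 1), (((g k : Fin n) : ℕ) + 1) * (if enc u (g k) then 1 else 0)
          = 2 ^ (k : ℕ) * ((tv u).testBit (k : ℕ)).toNat := by
        intro k
        rw [hencg u k, hgval k]
        cases (tv u).testBit (k : ℕ) <;> simp
      rw [Finset.sum_congr rfl (fun k _ => hterm k),
        Fin.sum_univ_eq_sum_range (fun k => 2 ^ k * ((tv u).testBit k).toNat) (L + 1),
        bitsum (L + 1) (tv u)]
      exact Nat.mod_eq_of_lt (by have := htvlt u; omega)
    have hFsum : (∑ i ∈ Pᶜ, ((i : ℕ) + 1) * (if enc u i then 1 else 0)) = mom (w u) := by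
      have hsplit2 : mom (w u) = (∑ i ∈ P, ((i : ℕ) + 1) * (if w u i then 1 else 0))
          + ∑ i ∈ Pᶜ, ((i : ℕ) + 1) * (if w u i then 1 else 0) :=
        (Finset.sum_add_sum_compl P _).symm
      have hz : (∑ i ∈ P, ((i : ℕ) + 1) * (if w u i then 1 else 0)) = 0 := by
        apply Finset.sum_eq_zero
        intro i hi
        have hiF : i ∉ F := by rw [hF]; simpa using hi
        have : w u i = false := by simp only [hw]; rw [dif_neg hiF]
        rw [this]; simp
      have hagree : ∀ i ∈ Pᶜ, ((i : ℕ) + 1) * (if enc u i then 1 else 0)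
          = ((i : ℕ) + 1) * (if w u i then 1 else 0) := by
        intro i hi
        have hiF : i ∈ F := by rw [hF]; exact hi
        rw [hencF u i hiF, hwF u i hiF]
      rw [Finset.sum_congr rfl hagree]
      omega
    rw [hsplit, hPsum, hFsum, Nat.add_comm]
    exact mod_key (mom (w u)) (n + 1) (by omega)
  have hdist : ∀ u v : Fin n' → Bool, hammingDist u v ≤ hammingDist (enc u) (enc v) := by
    intro u v
    show ({j | u j ≠ v j} : Finset (Fin n')).card ≤ ({i | enc u i ≠ enc v i} : Finset (Fin n)).card
    apply Finset.card_le_card_of_injOn (fun j => ((e j : { x // x ∈ F }) : Fin n))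
    · intro j hj
      simp only [Finset.mem_coe, mem_filter, mem_univ, true_and] at hj ⊢
      have hmem : ((e j : { x // x ∈ F }) : Fin n) ∈ F := (e j).2
      rw [hencF u _ hmem, hencF v _ hmem]
      have hsub : (⟨((e j : { x // x ∈ F }) : Fin n), hmem⟩ : { x // x ∈ F }) = e j :=
        Subtype.ext rfl
      rw [hsub]
      simpa using hj
    · intro a _ b _ h
      exact e.toEquiv.injective (Subtype.coe_injective h)
  have hencinj : Function.Injective enc := by
    intro u v h
    by_contra huv
    have h1 : 1 ≤ hammingDist u v := by
      have := hammingDist_pos.mpr huv; omega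
    have := hdist u v
    rw [h, hammingDist_self] at this
    omega
  -- maximal code in the n'-cube
  set famU : Finset (Finset (Fin n' → Bool)) :=
    Finset.univ.powerset.filter
      (fun D => ∀ x ∈ D, ∀ y ∈ D, x ≠ y → dmin ≤ hammingDist x y) with hfamU
  have hfamUne : famU.Nonempty := by
    refine ⟨∅, ?_⟩
    rw [hfamU, mem_filter]
    exact ⟨mem_powerset.mpr (empty_subset _), by intro x hx; simp at hx⟩
  obtain ⟨U, hUfam, hUmax⟩ := Finset.exists_max_image famU Finset.card hfamUne
  have hUdist : ∀ x ∈ U, ∀ y ∈ U, x ≠ y → dmin ≤ hammingDist x y := by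
    have := (mem_filter.mp hUfam).2
    exact this
  have hUcover : ∀ y : Fin n' → Bool, ∃ c ∈ U, hammingDist c y ≤ dmin - 1 := by
    intro y
    by_cases hyU : y ∈ U
    · exact ⟨y, hyU, by rw [hammingDist_self]; omega⟩
    by_contra hno
    push_neg at hno
    have hins : insert y U ∈ famU := by
      rw [hfamU, mem_filter]
      refine ⟨mem_powerset.mpr (subset_univ _), ?_⟩
      intro x hx z hz hxz
      rcases mem_insert.mp hx with rfl | hxU <;> rcases mem_insert.mp hz with rfl | hzU
      · exact absurd rfl hxz
      · have := hno z hzU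
        rw [hammingDist_comm]
        omega
      · have := hno x hxU
        omega
      · exact hUdist x hxU z hzU hxz
    have := hUmax (insert y U) hins
    rw [Finset.card_insert_of_notMem hyU] at this
    omega
  have hUbound : 2 ^ n' ≤ U.card * ∑ i ∈ Finset.range dmin, (n'.choose i) := by
    have := coverBound U (dmin - 1) hUcover
    have hdm : dmin - 1 + 1 = dmin := by omega
    rwa [hdm] at this
  have hUne : U.Nonempty := by
    rcases U.eq_empty_or_nonempty with h | h
    · exfalso
      obtain ⟨c, hc, _⟩ := hUcover (fun _ => false)
      rw [h] at hc
      exact absurd hc (notMem_empty _)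
    · exact h
  refine ⟨U.image enc, ?_, ?_, ?_, ?_⟩
  · intro x hx
    obtain ⟨u, _, rfl⟩ := mem_image.mp hx
    exact hmom u
  · intro x hx y hy hxy
    obtain ⟨u, hu, rfl⟩ := mem_image.mp hx
    obtain ⟨v, hv, rfl⟩ := mem_image.mp hy
    have huv : u ≠ v := fun h => hxy (by rw [h])
    exact le_trans (hUdist u hu v hv huv) (hdist u v)
  · rw [Finset.card_image_of_injective _ hencinj]
    exact hUbound
  · exact hUne.image enc

/-- Combined lower bound. For `n > ⌊log₂ n⌋ + 1` and `d_min ≥ 1`, writing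
`L = ⌊log₂ n⌋`, there are a residue `a` mod `n+1` and a code `C*` of length `n` with all
moments `≡ a (mod n+1)`, minimum Hamming distance at least `d_min`, and
`|C*| ≥ max{ 2^(n−1)/V₂(n, d_min+1), 2^(n−L−1)/V₂(n−L−1, d_min−1) }` as rationals. -/
theorem stmt11 {n dmin : ℕ} (hd : 1 ≤ dmin) (hn : Nat.log 2 n + 1 < n) :
    ∃ (a : ℕ) (C : Finset (Fin n → Bool)),
      (∀ x ∈ C, mom x % (n + 1) = a) ∧
      (∀ x ∈ C, ∀ y ∈ C, x ≠ y → dmin ≤ hammingDist x y) ∧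
      max ((2 ^ (n - 1) : ℚ) / (∑ i ∈ Finset.range (dmin + 2), (n.choose i : ℚ)))
          ((2 ^ (n - Nat.log 2 n - 1) : ℚ) /
            (∑ i ∈ Finset.range dmin, ((n - Nat.log 2 n - 1).choose i : ℚ)))
        ≤ (C.card : ℚ) := by
  classical
  obtain ⟨E, hEmom, hEdist, hEbound, hEne⟩ := construction hd hn
  set famC : Finset (Finset (Fin n → Bool)) :=
    Finset.univ.powerset.filter
      (fun D => E ⊆ D ∧ (∀ x ∈ D, mom x % (n + 1) = 0) ∧
        ∀ x ∈ D, ∀ y ∈ D, x ≠ y → dmin ≤ hammingDist x y) with hfamC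
  have hEfam : E ∈ famC := by
    rw [hfamC, mem_filter]
    exact ⟨mem_powerset.mpr (subset_univ _), subset_rfl, hEmom, hEdist⟩
  obtain ⟨C, hCfam, hCmax⟩ := Finset.exists_max_image famC Finset.card ⟨E, hEfam⟩
  obtain ⟨-, hEC, hCmom, hCdist⟩ := mem_filter.mp hCfam
  have hCcover : ∀ y : Fin n → Bool, ∃ c ∈ C, hammingDist c y ≤ dmin + 1 := by
    intro y
    obtain ⟨y', hy'd, hy'm⟩ := reach (show 1 ≤ n by omega) y
    have hcomm : hammingDist y' y = hammingDist y y' := hammingDist_comm _ _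
    by_cases hy'C : y' ∈ C
    · exact ⟨y', hy'C, by omega⟩
    have hclose : ∃ c ∈ C, hammingDist c y' ≤ dmin - 1 := by
      by_contra hno
      push_neg at hno
      have hins : insert y' C ∈ famC := by
        rw [hfamC, mem_filter]
        refine ⟨mem_powerset.mpr (subset_univ _), subset_trans hEC (subset_insert _ _), ?_, ?_⟩
        · intro x hx
          rcases mem_insert.mp hx with rfl | hxC
          · exact hy'm
          · exact hCmom x hxC
        · intro x hx z hz hxz
          rcases mem_insert.mp hx with rfl | hxC <;> rcases mem_insert.mp hz with rfl | hzC
          · exact absurd rfl hxz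
          · have := hno z hzC
            rw [hammingDist_comm]
            omega
          · have := hno x hxC
            omega
          · exact hCdist x hxC z hzC hxz
      have := hCmax _ hins
      rw [Finset.card_insert_of_notMem hy'C] at this
      omega
    obtain ⟨c, hc, hcd⟩ := hclose
    refine ⟨c, hc, ?_⟩
    have htr := hammingDist_triangle c y' y
    omega
  have hCb1 : 2 ^ n ≤ C.card * ∑ i ∈ Finset.range (dmin + 2), n.choose i :=
    coverBound C (dmin + 1) hCcover
  have hCb2 : 2 ^ (n - Nat.log 2 n - 1)
      ≤ C.card * ∑ i ∈ Finset.range dmin, ((n - Nat.log 2 n - 1).choose i) :=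
    le_trans hEbound (Nat.mul_le_mul_right _ (Finset.card_le_card hEC))
  refine ⟨0, C, hCmom, hCdist, ?_⟩
  rw [max_le_iff]
  constructor
  · have hcast : (∑ i ∈ Finset.range (dmin + 2), (n.choose i : ℚ))
        = ((∑ i ∈ Finset.range (dmin + 2), n.choose i : ℕ) : ℚ) := by
      push_cast; ring
    have hpos : (0 : ℚ) < ∑ i ∈ Finset.range (dmin + 2), (n.choose i : ℚ) := by
      rw [hcast, Nat.cast_pos]
      exact Finset.sum_pos' (fun i _ => Nat.zero_le _)
        ⟨0, mem_range.mpr (by omega), by simp⟩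
    rw [div_le_iff₀ hpos]
    calc (2 : ℚ) ^ (n - 1) ≤ 2 ^ n := by
          apply pow_le_pow_right₀ (by norm_num) (by omega)
      _ ≤ (C.card : ℚ) * ∑ i ∈ Finset.range (dmin + 2), (n.choose i : ℚ) := by
          rw [hcast]
          exact_mod_cast hCb1
  · have hcast : (∑ i ∈ Finset.range dmin, ((n - Nat.log 2 n - 1).choose i : ℚ))
        = ((∑ i ∈ Finset.range dmin, (n - Nat.log 2 n - 1).choose i : ℕ) : ℚ) := by
      push_cast; ring
    have hpos : (0 : ℚ) < ∑ i ∈ Finset.range dmin, ((n - Nat.log 2 n - 1).choose i : ℚ) := by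
      rw [hcast, Nat.cast_pos]
      exact Finset.sum_pos' (fun i _ => Nat.zero_le _)
        ⟨0, mem_range.mpr (by omega), by simp⟩
    rw [div_le_iff₀ hpos]
    rw [hcast]
    exact_mod_cast hCb2
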